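/- Let R be a finite commutative Frobenius ring of characteristic 2 and let G be the cyclic group of order n, with elements enumerated as 1, x, x², …, x^{n−1} (so each σ(v) is a circulant matrix indexed by Z/nZ). Let v1, v2 ∈ RG and let A be an n×n reverse circulant matrix over R. Then the code C_σ generated by the rows of M(σ) is a self-dual code of length 4n if and only if σ((v1+v2)(v1+v2)*) + A² = I_n and v1 v2* = v2 v1*. -/

import Mathlib

open Matrix

/-- The dual of a code (submodule of `ι → R`) with respect to the standard bilinear form. -/
def dualCode {R : Type*} [CommRing R] {ι : Type*} [Fintype ι]
    (C : Submodule R (ι → R)) : Submodule R (ι → R) where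
  carrier := {x | ∀ c ∈ C, ∑ i, x i * c i = 0}
  add_mem' := by
    intro a b ha hb c hc
    simp only [Set.mem_setOf_eq] at ha hb ⊢
    simp [Pi.add_apply, add_mul, Finset.sum_add_distrib, ha c hc, hb c hc]
  zero_mem' := by
    intro c hc
    simp
  smul_mem' := by
    intro r a ha c hc
    simp only [Set.mem_setOf_eq] at ha ⊢
    simp [Pi.smul_apply, smul_eq_mul, mul_assoc, ← Finset.mul_sum, ha c hc]

/-- A code is self-dual if it equals its dual. -/
def IsSelfDual {R : Type*} [CommRing R] {ι : Type*} [Fintype ι]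
    (C : Submodule R (ι → R)) : Prop :=
  C = dualCode C

/-- The code generated by the rows of a matrix. -/
def rowSpan {R : Type*} [CommRing R] {κ ι : Type*} (M : Matrix κ ι R) :
    Submodule R (ι → R) :=
  Submodule.span R (Set.range M)

/-- The matrix `σ(v)` of a group ring element `v` with respect to a fixed enumeration `e`
of the group elements: its `(i,j)` entry is the coefficient of `v` at `(e i)⁻¹ * (e j)`. -/
def sigma {R : Type*} [CommRing R] {G : Type*} [Group G] {ι : Type*}
    (e : ι ≃ G) (v : MonoidAlgebra R G) : Matrix ι ι R :=
  Matrix.of fun i j => v.coeff ((e i)⁻¹ * e j)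

/-- The canonical involution `v ↦ v* = ∑ α_g g⁻¹` on a group ring. -/
def invol {R : Type*} [CommRing R] {G : Type*} [Group G]
    (v : MonoidAlgebra R G) : MonoidAlgebra R G :=
  MonoidAlgebra.ofCoeff (Finsupp.equivMapDomain (Equiv.inv G) v.coeff)

/-- A matrix indexed by `ZMod n` is reverse circulant if its `(i,j)` entry
depends only on `i + j`. -/
def IsRevCirculant {R : Type*} {n : ℕ} (A : Matrix (ZMod n) (ZMod n) R) : Prop :=
  ∃ a : ZMod n → R, ∀ i j, A i j = a (i + j)

/-- A matrix indexed by `ZMod n` is circulant if its `(i,j)` entry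
depends only on `j - i`. -/
def IsCirculant {R : Type*} {n : ℕ} (A : Matrix (ZMod n) (ZMod n) R) : Prop :=
  ∃ a : ZMod n → R, ∀ i j, A i j = a (j - i)

/-! ### Auxiliary lemmas about `sigma` and `invol` -/

section SigmaLemmas

variable {R : Type*} [CommRing R] {G : Type*} [Group G] {ι : Type*}

lemma sigma_apply' (e : ι ≃ G) (v : MonoidAlgebra R G) (i j : ι) :
    sigma e v i j = v.coeff ((e i)⁻¹ * e j) := rfl

lemma invol_apply' (v : MonoidAlgebra R G) (g : G) : (invol v).coeff g = v.coeff g⁻¹ := rfl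

lemma sigma_add' (e : ι ≃ G) (v w : MonoidAlgebra R G) :
    sigma e (v + w) = sigma e v + sigma e w := by
  ext i j; simp [sigma_apply']

lemma sigma_mul' [Fintype ι] (e : ι ≃ G) (v w : MonoidAlgebra R G) :
    sigma e (v * w) = sigma e v * sigma e w := by
  haveI : Fintype G := Fintype.ofEquiv ι e
  ext i j
  rw [Matrix.mul_apply, sigma_apply', MonoidAlgebra.mul_apply_left,
    Finsupp.sum_fintype _ _ (by intro g; simp)]
  refine Fintype.sum_equiv ((Equiv.mulLeft (e i)).trans e.symm) _ _ ?_
  intro a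
  simp only [Equiv.trans_apply, Equiv.coe_mulLeft, sigma_apply', Equiv.apply_symm_apply]
  rw [inv_mul_cancel_left, _root_.mul_inv_rev, mul_assoc]

lemma sigma_invol' [Fintype ι] (e : ι ≃ G) (v : MonoidAlgebra R G) :
    sigma e (invol v) = (sigma e v)ᵀ := by
  ext i j
  rw [sigma_apply', Matrix.transpose_apply, sigma_apply', invol_apply',
    _root_.mul_inv_rev, inv_inv]

lemma sigma_injective' (e : ι ≃ G) : Function.Injective (sigma (R := R) e) := by
  intro v w h
  ext g
  have := congrFun (congrFun h (e.symm 1)) (e.symm g)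
  simpa [sigma_apply'] using this

end SigmaLemmas

/-! ### Circulant lemmas -/

section CircLemmas

variable {R : Type*} [CommRing R] {n : ℕ} [NeZero n]

omit [NeZero n] in
lemma revCirc_symm' {A : Matrix (ZMod n) (ZMod n) R} (hA : IsRevCirculant A) : Aᵀ = A := by
  obtain ⟨a, ha⟩ := hA
  ext i j
  rw [Matrix.transpose_apply, ha, ha, add_comm]

lemma circ_mul_revCirc' {M A : Matrix (ZMod n) (ZMod n) R}
    (hM : IsCirculant M) (hA : IsRevCirculant A) : M * A = A * Mᵀ := by
  obtain ⟨m, hm⟩ := hM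
  obtain ⟨a, ha⟩ := hA
  ext i j
  rw [Matrix.mul_apply, Matrix.mul_apply]
  refine Fintype.sum_equiv (Equiv.addRight (j - i)) _ _ ?_
  intro k
  rw [hm, ha, ha, Matrix.transpose_apply, hm, Equiv.coe_addRight,
    show i + (k + (j - i)) = k + j by ring, show k + (j - i) - j = k - i by ring, mul_comm]

omit [NeZero n] in
lemma sigma_ofAdd_circulant' (v : MonoidAlgebra R (Multiplicative (ZMod n))) :
    IsCirculant (sigma Multiplicative.ofAdd v) := by
  refine ⟨fun d => v.coeff (Multiplicative.ofAdd d), fun i j => ?_⟩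
  rw [sigma_apply']
  congr 1
  rw [sub_eq_neg_add, ofAdd_add, ofAdd_neg]

end CircLemmas

/-! ### Self-duality of codes generated by `(I | X)` -/

section SelfDualChar

variable {R : Type*} [CommRing R] {ι : Type*} [Fintype ι]

lemma mem_dualCode' {C : Submodule R (ι → R)} {x : ι → R} :
    x ∈ dualCode C ↔ ∀ c ∈ C, ∑ i, x i * c i = 0 := Iff.rfl

lemma dualCode_rowSpan' {κ : Type*} [Fintype κ] (M : Matrix κ ι R) :
    dualCode (rowSpan M) = LinearMap.ker M.mulVecLin := by
  ext x
  rw [mem_dualCode', LinearMap.mem_ker]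
  constructor
  · intro hx
    funext k
    have := hx (M k) (Submodule.subset_span ⟨k, rfl⟩)
    simpa [Matrix.mulVecLin_apply, Matrix.mulVec, dotProduct, mul_comm] using this
  · intro hx c hc
    induction hc using Submodule.span_induction with
    | mem c hmem =>
      obtain ⟨k, rfl⟩ := hmem
      have := congrFun hx k
      simpa [Matrix.mulVecLin_apply, Matrix.mulVec, dotProduct, mul_comm] using this
    | zero => simp
    | add c d _ _ hc hd => simp [mul_add, Finset.sum_add_distrib, hc, hd]
    | smul r c _ hc =>
      simp only [Pi.smul_apply, smul_eq_mul, mul_left_comm]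
      rw [← Finset.mul_sum, hc, mul_zero]

omit [Fintype ι] in
lemma rowSpan_eq_range' {κ : Type*} [Fintype κ] (M : Matrix κ ι R) :
    rowSpan M = LinearMap.range M.vecMulLinear :=
  (range_vecMulLinear M).symm

omit [Fintype ι] in
lemma matrix_add_self' [CharP R 2] (M : Matrix ι ι R) : M + M = 0 := by
  rw [← two_smul R M, show (2 : R) = 0 from CharTwo.two_eq_zero, zero_smul]

omit [Fintype ι] in
lemma matrix_neg_eq' [CharP R 2] (M : Matrix ι ι R) : -M = M := by
  rw [neg_eq_iff_add_eq_zero, matrix_add_self']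

lemma isSelfDual_fromColumns_iff' {κ : Type*} [Fintype κ] [DecidableEq κ] [CharP R 2]
    (X : Matrix κ κ R) :
    IsSelfDual (rowSpan (Matrix.fromCols (1 : Matrix κ κ R) X)) ↔ X * Xᵀ = 1 := by
  unfold IsSelfDual
  rw [dualCode_rowSpan', rowSpan_eq_range']
  constructor
  · intro h
    have key : ∀ w : κ → R, (1 + X * Xᵀ) *ᵥ w = 0 := by
      intro w
      have hmem : Sum.elim w (Xᵀ *ᵥ w) ∈
          LinearMap.range (Matrix.fromCols (1 : Matrix κ κ R) X).vecMulLinear := by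
        refine ⟨w, ?_⟩
        rw [Matrix.vecMulLinear_apply, Matrix.vecMul_fromCols, Matrix.vecMul_one,
          Matrix.mulVec_transpose]
      rw [h, LinearMap.mem_ker, Matrix.mulVecLin_apply, Matrix.fromCols_mulVec_sumElim,
        Matrix.one_mulVec] at hmem
      rw [Matrix.add_mulVec, Matrix.one_mulVec, ← Matrix.mulVec_mulVec]
      exact hmem
    have h0 : 1 + X * Xᵀ = 0 := by
      ext i j
      have := congrFun (key (Pi.single j 1)) i
      simpa using this
    calc X * Xᵀ = 1 + (1 + X * Xᵀ) := by rw [← add_assoc, matrix_add_self', zero_add]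
    _ = 1 := by rw [h0, add_zero]
  · intro hX
    have hX' : Xᵀ * X = 1 := mul_eq_one_comm.mp hX
    ext x
    rw [LinearMap.mem_range, LinearMap.mem_ker]
    constructor
    · rintro ⟨w, rfl⟩
      rw [Matrix.vecMulLinear_apply, Matrix.vecMul_fromCols, Matrix.vecMul_one,
        ← Matrix.mulVec_transpose, Matrix.mulVecLin_apply, Matrix.fromCols_mulVec_sumElim,
        Matrix.one_mulVec, Matrix.mulVec_mulVec, hX, Matrix.one_mulVec]
      funext i
      rw [Pi.add_apply, Pi.zero_apply, CharTwo.add_self_eq_zero]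
    · intro hx
      set y := x ∘ Sum.inl with hy
      set z := x ∘ Sum.inr with hz
      have hxe : x = Sum.elim y z := (Sum.elim_comp_inl_inr x).symm
      rw [hxe, Matrix.mulVecLin_apply, Matrix.fromCols_mulVec_sumElim,
        Matrix.one_mulVec] at hx
      have hyz : y = X *ᵥ z := by
        funext i
        have := congrFun hx i
        rw [Pi.add_apply, Pi.zero_apply, add_eq_zero_iff_eq_neg, CharTwo.neg_eq] at this
        exact this
      refine ⟨y, ?_⟩
      rw [Matrix.vecMulLinear_apply, Matrix.vecMul_fromCols, Matrix.vecMul_one,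
        ← Matrix.mulVec_transpose, hxe]
      congr 1
      rw [hyz, Matrix.mulVec_mulVec, hX', Matrix.one_mulVec]

end SelfDualChar

/-- Lemma 2.7: for the cyclic group of order `n` (realized as `Multiplicative (ZMod n)`
with its natural enumeration, so that each `σ(v)` is circulant), the code `C_σ` is
self-dual iff `σ((v₁+v₂)(v₁+v₂)*) + A² = I` and `v₁v₂* = v₂v₁*`. -/
theorem selfDual_cyclic_iff
    {R : Type*} [CommRing R] [Fintype R] [CharP R 2]
    (hFrob : Module.Injective R R)
    {n : ℕ} [NeZero n]
    (v1 v2 : MonoidAlgebra R (Multiplicative (ZMod n)))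
    (A : Matrix (ZMod n) (ZMod n) R) (hA : IsRevCirculant A) :
    IsSelfDual (rowSpan (Matrix.fromCols (1 : Matrix (ZMod n ⊕ ZMod n) (ZMod n ⊕ ZMod n) R)
        (Matrix.fromBlocks (sigma Multiplicative.ofAdd v1) (sigma Multiplicative.ofAdd v2 + A)
          (sigma Multiplicative.ofAdd v2 + A) (sigma Multiplicative.ofAdd v1)))) ↔
      (sigma Multiplicative.ofAdd ((v1 + v2) * invol (v1 + v2)) + A ^ 2 = 1 ∧
        v1 * invol v2 = v2 * invol v1) := by
  set B := sigma (R := R) Multiplicative.ofAdd v1 with hB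
  set C0 := sigma (R := R) Multiplicative.ofAdd v2 with hC0
  have hAt : Aᵀ = A := revCirc_symm' hA
  have hBA : B * A = A * Bᵀ := circ_mul_revCirc' (sigma_ofAdd_circulant' v1) hA
  have hCA : C0 * A = A * C0ᵀ := circ_mul_revCirc' (sigma_ofAdd_circulant' v2) hA
  rw [isSelfDual_fromColumns_iff']
  have hXX : Matrix.fromBlocks B (C0 + A) (C0 + A) B *
      (Matrix.fromBlocks B (C0 + A) (C0 + A) B)ᵀ =
      Matrix.fromBlocks (B * Bᵀ + C0 * C0ᵀ + A ^ 2) (B * C0ᵀ + C0 * Bᵀ)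
        (B * C0ᵀ + C0 * Bᵀ) (B * Bᵀ + C0 * C0ᵀ + A ^ 2) := by
    rw [Matrix.fromBlocks_transpose, Matrix.fromBlocks_multiply]
    have e1 : B * Bᵀ + (C0 + A) * (C0 + A)ᵀ = B * Bᵀ + C0 * C0ᵀ + A ^ 2 := by
      rw [Matrix.transpose_add, hAt]
      calc B * Bᵀ + (C0 + A) * (C0ᵀ + A)
          = B * Bᵀ + C0 * C0ᵀ + (C0 * A + A * C0ᵀ) + A * A := by noncomm_ring
        _ = B * Bᵀ + C0 * C0ᵀ + A ^ 2 := by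
            rw [hCA, matrix_add_self', add_zero, pow_two]
    have e2 : B * (C0 + A)ᵀ + (C0 + A) * Bᵀ = B * C0ᵀ + C0 * Bᵀ := by
      rw [Matrix.transpose_add, hAt]
      calc B * (C0ᵀ + A) + (C0 + A) * Bᵀ
          = B * C0ᵀ + C0 * Bᵀ + (B * A + A * Bᵀ) := by noncomm_ring
        _ = B * C0ᵀ + C0 * Bᵀ := by rw [hBA, matrix_add_self', add_zero]
    have e3 : (C0 + A) * Bᵀ + B * (C0 + A)ᵀ = B * C0ᵀ + C0 * Bᵀ := by
      rw [add_comm, e2]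
    have e4 : (C0 + A) * (C0 + A)ᵀ + B * Bᵀ = B * Bᵀ + C0 * C0ᵀ + A ^ 2 := by
      rw [add_comm, e1]
    rw [Matrix.fromBlocks_inj]
    exact ⟨e1, e2, e3, e4⟩
  rw [hXX, ← Matrix.fromBlocks_one, Matrix.fromBlocks_inj]
  have hs : sigma Multiplicative.ofAdd ((v1 + v2) * invol (v1 + v2)) + A ^ 2
      = (B * Bᵀ + C0 * C0ᵀ + A ^ 2) + (B * C0ᵀ + C0 * Bᵀ) := by
    rw [sigma_mul', sigma_invol', sigma_add', Matrix.transpose_add, ← hB, ← hC0]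
    noncomm_ring
  have h2 : (v1 * invol v2 = v2 * invol v1) ↔ B * C0ᵀ + C0 * Bᵀ = 0 := by
    rw [← (sigma_injective' (R := R) Multiplicative.ofAdd).eq_iff, sigma_mul', sigma_mul',
      sigma_invol', sigma_invol', ← hB, ← hC0]
    constructor
    · intro h; rw [h, matrix_add_self']
    · intro h
      exact (eq_neg_of_add_eq_zero_left h).trans (matrix_neg_eq' _)
  constructor
  · rintro ⟨hP, hQ, -, -⟩
    exact ⟨by rw [hs, hQ, add_zero, hP], h2.mpr hQ⟩
  · rintro ⟨h1, hc2⟩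
    have hQ := h2.mp hc2
    rw [hs, hQ, add_zero] at h1
    exact ⟨h1, hQ, hQ, h1⟩
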